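/- Let γ,β∈ℝ with β≠0 satisfy either 0<γ≤β<1 or β<γ≤1, and let B(y)=(y+(β−1)y^{1+β}−βy^β)/(β(β−1)) (note β<1 and β≠0,1 in both cases). Define Υ(y)=3(1−y)+3(β−γ)B(y)y^{−β} for y>0. Then Υ(y)>0 for all y∈(0,1), and lim_{y→0⁺}Υ(y)=3(1−γ)/(1−β) ≥ 0. -/
import Mathlib


open Real Set Filter Topology

noncomputable section

/-- The function `B(y) = (y + (β−1)y^{1+β} − βy^β)/(β(β−1))` of the polytropic
elastic model (case `β ≠ 1`). -/
def Bfun (β y : ℝ) : ℝ := (y + (β - 1) * y ^ (1 + β) - β * y ^ β) / (β * (β - 1))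

/-- `Υ(y) = 3(1−y) + 3(β−γ)B(y)y^{−β}`, the function appearing in the planar
dynamical system of the polytropic static problem. -/
def Upsilon (γ β y : ℝ) : ℝ := 3 * (1 - y) + 3 * (β - γ) * Bfun β y * y ^ (-β)

lemma bfun_eq (β : ℝ) {y : ℝ} (hy : 0 < y) :
    Bfun β y * y ^ (-β) = (y ^ (1 - β) + (β - 1) * y - β) / (β * (β - 1)) := by
  have h1 : y ^ (1 + β) * y ^ (-β) = y := by rw [← Real.rpow_add hy]; simp
  have h2 : (y : ℝ) ^ β * y ^ (-β) = 1 := by rw [← Real.rpow_add hy]; simp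
  have h3 : y * y ^ (-β) = y ^ (1 - β) := by
    nth_rewrite 1 [← Real.rpow_one y]
    rw [← Real.rpow_add hy]; ring_nf
  unfold Bfun
  rw [div_mul_eq_mul_div]
  congr 1
  rw [sub_mul, add_mul, mul_assoc, mul_assoc, h1, h2, h3]; ring

lemma upsilon_eq (γ β : ℝ) {y : ℝ} (hy : 0 < y) :
    Upsilon γ β y = 3 * (1 - y) +
      3 * (β - γ) * ((y ^ (1 - β) + (β - 1) * y - β) / (β * (β - 1))) := by
  unfold Upsilon
  rw [mul_assoc, bfun_eq β hy, mul_assoc]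

lemma gdiv_nonneg (β : ℝ) (hβ0 : β ≠ 0) (hβ1 : β < 1) {y : ℝ} (hy : 0 < y) :
    0 ≤ (y ^ (1 - β) + (β - 1) * y - β) / (β * (β - 1)) := by
  have hs : (-1 : ℝ) ≤ y - 1 := by linarith
  rcases lt_or_gt_of_ne hβ0 with hβ | hβ
  · -- β < 0 : g ≥ 0, denom > 0
    have hp : (1:ℝ) ≤ 1 - β := by linarith
    have := one_add_mul_self_le_rpow_one_add hs hp
    rw [show (1:ℝ) + (y - 1) = y by ring] at this
    apply div_nonneg (by nlinarith) (by nlinarith)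
  · -- 0 < β < 1 : g ≤ 0, denom < 0
    have := rpow_one_add_le_one_add_mul_self hs (by linarith : (0:ℝ) ≤ 1 - β)
      (by linarith : (1:ℝ) - β ≤ 1)
    rw [show (1:ℝ) + (y - 1) = y by ring] at this
    rw [div_nonneg_iff]
    right
    constructor <;> nlinarith

/-- If `0 < γ ≤ β < 1` or `β < γ ≤ 1` (`β ≠ 0`), then `Υ > 0` on `(0,1)` and
`Υ(y) → 3(1−γ)/(1−β) ≥ 0` as `y → 0⁺`. -/
theorem Upsilon_pos (γ β : ℝ) (hβ0 : β ≠ 0)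
    (hcase : (0 < γ ∧ γ ≤ β ∧ β < 1) ∨ (β < γ ∧ γ ≤ 1)) :
    (∀ y ∈ Ioo (0:ℝ) 1, 0 < Upsilon γ β y) ∧
    Tendsto (fun y => Upsilon γ β y) (𝓝[>] (0:ℝ))
      (𝓝 (3 * (1 - γ) / (1 - β))) ∧
    0 ≤ 3 * (1 - γ) / (1 - β) := by

  have hβ1 : β < 1 := by rcases hcase with ⟨_, _, h⟩ | ⟨h1, h2⟩ <;> linarith
  have hγ1 : γ ≤ 1 := by rcases hcase with ⟨_, h, h'⟩ | ⟨_, h⟩ <;> linarith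
  refine ⟨?_, ?_, div_nonneg (by linarith) (by linarith)⟩
  · rintro y ⟨hy0, hy1⟩
    rw [upsilon_eq γ β hy0]
    have hD := gdiv_nonneg β hβ0 hβ1 hy0
    set D := (y ^ (1 - β) + (β - 1) * y - β) / (β * (β - 1)) with hDdef
    have hU1 : 3 * (1 - y) + 3 * (β - 1) * D = 3 * (y ^ (1 - β) - y) / β := by
      have hb1 : β - 1 ≠ 0 := sub_ne_zero.mpr (ne_of_lt hβ1)
      rw [hDdef]
      field_simp
      ring
    have hpos : 0 < 3 * (y ^ (1 - β) - y) / β := by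
      rcases lt_or_gt_of_ne hβ0 with hβ | hβ
      · have : y ^ (1 - β) < y ^ (1:ℝ) :=
          Real.rpow_lt_rpow_of_exponent_gt hy0 hy1 (by linarith)
        rw [Real.rpow_one] at this
        exact div_pos_of_neg_of_neg (by nlinarith) hβ
      · have : y ^ (1:ℝ) < y ^ (1 - β) :=
          Real.rpow_lt_rpow_of_exponent_gt hy0 hy1 (by linarith)
        rw [Real.rpow_one] at this
        exact div_pos (by nlinarith) hβ
    have hsplit : 3 * (β - γ) * D = 3 * (β - 1) * D + 3 * (1 - γ) * D := by ring
    nlinarith [mul_nonneg (by linarith : (0:ℝ) ≤ 3 * (1 - γ)) hD]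
  · have hy0 : Tendsto (fun y : ℝ => y) (𝓝[>] (0:ℝ)) (𝓝 0) :=
      tendsto_id.mono_left nhdsWithin_le_nhds
    have hrp : Tendsto (fun y : ℝ => y ^ (1 - β)) (𝓝[>] (0:ℝ)) (𝓝 0) := by
      have h := (Real.continuousAt_rpow_const 0 (1 - β)
        (Or.inr (by linarith))).tendsto
      rw [Real.zero_rpow (by linarith : (1:ℝ) - β ≠ 0)] at h
      exact h.mono_left nhdsWithin_le_nhds
    have hT : Tendsto (fun y : ℝ => 3 * (1 - y) +
        3 * (β - γ) * ((y ^ (1 - β) + (β - 1) * y - β) / (β * (β - 1))))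
        (𝓝[>] (0:ℝ))
        (𝓝 (3 * (1 - (0:ℝ)) +
          3 * (β - γ) * (((0:ℝ) + (β - 1) * 0 - β) / (β * (β - 1))))) := by
      exact ((tendsto_const_nhds.sub hy0).const_mul 3).add
        ((((hrp.add (hy0.const_mul (β - 1))).sub tendsto_const_nhds).div_const
          (β * (β - 1))).const_mul (3 * (β - γ)))
    have heq : 3 * (1 - (0:ℝ)) +
        3 * (β - γ) * (((0:ℝ) + (β - 1) * 0 - β) / (β * (β - 1))) =
        3 * (1 - γ) / (1 - β) := by
      have hb1 : β - 1 ≠ 0 := sub_ne_zero.mpr (ne_of_lt hβ1)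
      have hb1' : (1:ℝ) - β ≠ 0 := sub_ne_zero.mpr (ne_of_gt hβ1)
      field_simp
      ring
    rw [heq] at hT
    refine hT.congr' ?_
    filter_upwards [self_mem_nhdsWithin] with y hy
    exact (upsilon_eq γ β hy).symm
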